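/- For real numbers x ≥ p > 0, the incomplete gamma integral satisfies ∫_x^∞ e^{-y} y^p dy ≤ x^{p+1} e^{-x} / (x - p), where for x = p the right-hand side is interpreted as +∞ (so assume x > p). -/

import Mathlib

open MeasureTheory Real

theorem stmt2 (x p : ℝ) (hp : 0 < p) (hx : p < x) :
    ∫ y in Set.Ioi x, Real.exp (-y) * y ^ p ≤ x ^ (p + 1) * Real.exp (-x) / (x - p) := by
  have hx0 : 0 < x := hp.trans hx
  set c : ℝ := (x - p) / x with hc
  have hc0 : 0 < c := div_pos (by linarith) hx0
  have hcx : c * x = x - p := div_mul_cancel₀ _ hx0.ne'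
  have h1c : 1 - c = p / x := by rw [hc]; field_simp; ring
  -- comparison function
  set g : ℝ → ℝ := fun y => x ^ p * Real.exp (-x + c * x) * Real.exp (-(c * y)) with hg
  have hgint : IntegrableOn g (Set.Ioi x) := by
    have := (exp_neg_integrableOn_Ioi x hc0).const_mul (x ^ p * Real.exp (-x + c * x))
    simpa [hg, neg_mul, IntegrableOn] using this
  have hfint : IntegrableOn (fun y => Real.exp (-y) * y ^ p) (Set.Ioi x) := by
    have := Real.GammaIntegral_convergent (s := p + 1) (by linarith)
    simpa using this.mono_set (Set.Ioi_subset_Ioi hx0.le)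
  have hbound : ∀ y ∈ Set.Ioi x, Real.exp (-y) * y ^ p ≤ g y := by
    intro y hy
    have hyx : x < y := hy
    have hy0 : 0 < y := hx0.trans hyx
    have hlog' : Real.log y - Real.log x ≤ (y - x) / x := by
      rw [← Real.log_div hy0.ne' hx0.ne']
      calc Real.log (y / x) ≤ y / x - 1 := Real.log_le_sub_one_of_pos (div_pos hy0 hx0)
        _ = (y - x) / x := by field_simp
    simp only [hg]
    rw [Real.rpow_def_of_pos hy0, Real.rpow_def_of_pos hx0]
    simp only [← Real.exp_add]
    apply Real.exp_le_exp.mpr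
    have hkey : p * (Real.log y - Real.log x) ≤ p * ((y - x) / x) :=
      mul_le_mul_of_nonneg_left hlog' hp.le
    have heq : (1 - c) * (y - x) = p * ((y - x) / x) := by rw [h1c]; ring
    nlinarith [hkey, heq]
  calc ∫ y in Set.Ioi x, Real.exp (-y) * y ^ p
      ≤ ∫ y in Set.Ioi x, g y :=
        setIntegral_mono_on hfint hgint measurableSet_Ioi hbound
    _ = x ^ p * Real.exp (-x + c * x) * ∫ y in Set.Ioi x, Real.exp (-(c * y)) := by
        simp only [hg]; rw [integral_const_mul]
    _ = x ^ p * Real.exp (-x + c * x) * (c⁻¹ * Real.exp (-(c * x))) := by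
        rw [integral_comp_mul_left_Ioi (fun t => Real.exp (-t)) x hc0, integral_exp_neg_Ioi,
          smul_eq_mul]
    _ = x ^ (p + 1) * Real.exp (-x) / (x - p) := by
        rw [hcx, Real.rpow_add hx0, Real.rpow_one]
        have he : Real.exp (-x + (x - p)) * Real.exp (-(x - p)) = Real.exp (-x) := by
          rw [← Real.exp_add]; congr 1; ring
        calc x ^ p * Real.exp (-x + (x - p)) * (c⁻¹ * Real.exp (-(x - p)))
            = x ^ p * c⁻¹ * (Real.exp (-x + (x - p)) * Real.exp (-(x - p))) := by ring
          _ = x ^ p * c⁻¹ * Real.exp (-x) := by rw [he]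
          _ = x ^ p * x * Real.exp (-x) / (x - p) := by
              rw [hc, inv_div]; field_simp
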